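/- Let n, q be positive integers, let W ∈ ℝ^{n×n} be symmetric positive definite, let S ∈ ℝ^{n×q} have linearly independent columns (so SᵀWS is invertible), and let R ∈ ℝ^{n×n} be symmetric. Define P := S(SᵀWS)⁻¹Sᵀ and E := W·P·R·(I − P·W) + R·P·W. Then E is symmetric and satisfies the action constraint E·S = R·S. -/

import Mathlib

open Matrix

/-- The projection-type matrix `P(S,W) := S (Sᵀ W S)⁻¹ Sᵀ`. -/
noncomputable def projMat {n q : ℕ} (S : Matrix (Fin n) (Fin q) ℝ)
    (W : Matrix (Fin n) (Fin n) ℝ) : Matrix (Fin n) (Fin n) ℝ :=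
  S * (Sᵀ * W * S)⁻¹ * Sᵀ

theorem stmt0 {n q : ℕ} (hn : 0 < n) (hq : 0 < q)
    (W : Matrix (Fin n) (Fin n) ℝ) (hW : W.PosDef)
    (S : Matrix (Fin n) (Fin q) ℝ)
    (hS : LinearIndependent ℝ (fun j : Fin q => Sᵀ j))
    (R : Matrix (Fin n) (Fin n) ℝ) (hR : R.IsSymm) :
    ((W * projMat S W * R * (1 - projMat S W * W) + R * projMat S W * W).IsSymm) ∧
    (W * projMat S W * R * (1 - projMat S W * W) + R * projMat S W * W) * S = R * S := by
  have hWsymm : Wᵀ = W := hW.isHermitian.eq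
  have hinj : Function.Injective S.mulVec := Matrix.mulVec_injective_iff.mpr hS
  -- M := Sᵀ W S is positive definite
  have hM : (Sᵀ * W * S).PosDef := by
    refine Matrix.PosDef.of_dotProduct_mulVec_pos ?_ ?_
    · have := (hW.posSemidef.conjTranspose_mul_mul_same S).1
      simpa using this
    · intro x hx
      have hSx : S *ᵥ x ≠ 0 := by
        intro h
        exact hx (hinj (by simp [h]))
      have hpos := hW.dotProduct_mulVec_pos hSx
      have key : x ⬝ᵥ ((Sᵀ * W * S) *ᵥ x) = (S *ᵥ x) ⬝ᵥ (W *ᵥ (S *ᵥ x)) := by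
        rw [← Matrix.mulVec_mulVec, ← Matrix.mulVec_mulVec, Matrix.dotProduct_mulVec,
          Matrix.vecMul_transpose]
      simp only [star_trivial] at hpos ⊢
      rw [key]
      exact hpos
  have hMdet : IsUnit (Sᵀ * W * S).det := (Matrix.isUnit_iff_isUnit_det _).mp hM.isUnit
  have hMinv : (Sᵀ * (W * S))⁻¹ * (Sᵀ * (W * S)) = 1 := by
    rw [← Matrix.mul_assoc Sᵀ W S]
    exact Matrix.nonsing_inv_mul _ hMdet
  -- P W S = S
  have hPWS : projMat S W * (W * S) = S := by
    unfold projMat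
    simp only [Matrix.mul_assoc]
    rw [hMinv, Matrix.mul_one]
  -- M symmetric, hence M⁻¹ and P symmetric
  have hMsymm : (Sᵀ * W * S)ᵀ = Sᵀ * W * S := by
    simp [Matrix.transpose_mul, hWsymm, Matrix.mul_assoc]
  have hPsymm : (projMat S W)ᵀ = projMat S W := by
    unfold projMat
    simp [Matrix.transpose_mul, Matrix.transpose_nonsing_inv, hWsymm, Matrix.mul_assoc]
  set P := projMat S W with hP
  refine ⟨?_, ?_⟩
  · unfold Matrix.IsSymm
    simp only [Matrix.transpose_add, Matrix.transpose_mul, Matrix.transpose_sub,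
      Matrix.transpose_one, hPsymm, hWsymm, hR.eq]
    noncomm_ring
  · have h1 : P * (W * S) = S := hPWS
    have expand : (W * P * R * (1 - P * W) + R * P * W) * S
        = W * (P * (R * S)) - W * (P * (R * (P * (W * S)))) + R * (P * (W * S)) := by
      simp only [mul_sub, mul_one, Matrix.sub_mul, Matrix.add_mul, Matrix.mul_assoc]
    rw [expand, h1]
    abel
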